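/- Let (S, ⋆) be a semigroup and suppose S' ⊆ S is a sub-semigroup such that S \ S' is finite and every element of S' is left cancellable in S' (a ⋆ b = a ⋆ b' implies b = b' for a,b,b' ∈ S'). Then for a set A ⊆ S the following are equivalent: (1) there exists an injective sequence (a_n)_{n=1}^∞ in S with FP(a_n)_{n=1}^∞ ⊆ A, where FP(a_n)_{n=1}^∞ = {a_{n_1} ⋆ ⋯ ⋆ a_{n_s} : n_1 < … < n_s}; (2) A ∈ 𝒰 for some non-principal idempotent ultrafilter 𝒰 = 𝒰 ⋆ 𝒰 on S. -/

import Mathlib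

open Hindman

attribute [local instance] Ultrafilter.mul Ultrafilter.semigroup

open Filter

section Aux

/-- A refinement of `Hindman.exists_FP_of_large`: if the idempotent ultrafilter is
non-principal (contains all cofinite sets), the sequence can be chosen injective. -/
theorem exists_injective_FP_of_large' {M : Type*} [Semigroup M] (U : Ultrafilter M)
    (U_idem : U * U = U) (hcof : ∀ x : M, ({x}ᶜ : Set M) ∈ U) (s₀ : Set M) (sU : s₀ ∈ U) :
    ∃ a : Stream' M, Function.Injective a ∧ FP a ⊆ s₀ := by
  have exists_elem : ∀ {s : Set M} (_hs : s ∈ U), (s ∩ { m | ∀ᶠ m' in U, m * m' ∈ s }).Nonempty :=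
    fun {s} hs => Ultrafilter.nonempty_of_mem (inter_mem hs <| by rwa [← U_idem] at hs)
  let elem : { s // s ∈ U } → M := fun p => (exists_elem p.property).some
  have elem_mem : ∀ p : { s // s ∈ U },
      elem p ∈ p.val ∧ { m | elem p * m ∈ p.val } ∈ U := fun p =>
    ⟨(exists_elem p.property).some_mem.1, (exists_elem p.property).some_mem.2⟩
  let succ : { s // s ∈ U } → { s // s ∈ U } := fun p =>
    ⟨(p.val ∩ { m | elem p * m ∈ p.val }) ∩ ({elem p}ᶜ : Set M),
      inter_mem (inter_mem p.property (elem_mem p).2) (hcof _)⟩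
  refine ⟨Stream'.corec elem succ (Subtype.mk s₀ sU), ?_, ?_⟩
  · -- injectivity
    have hget : ∀ (i : ℕ) (p : { s // s ∈ U }),
        (Stream'.corec elem succ p).get i = elem (succ^[i] p) := by
      intro i
      induction i with
      | zero => intro p; rw [Stream'.corec_eq]; rfl
      | succ i ih =>
        intro p
        have : (Stream'.corec elem succ p).get (i + 1)
            = (Stream'.corec elem succ (succ p)).get i := by
          rw [Stream'.corec_eq]; rfl
        rw [this, ih (succ p), Function.iterate_succ_apply]
    have hsub : ∀ (j : ℕ) (p : { s // s ∈ U }), (succ^[j] p).val ⊆ p.val := by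
      intro j
      induction j with
      | zero => intro p; exact subset_rfl
      | succ j ih =>
        intro p
        rw [Function.iterate_succ_apply]
        refine (ih (succ p)).trans ?_
        intro x hx
        exact hx.1.1
    have key : ∀ (i j : ℕ), i < j →
        (Stream'.corec elem succ ⟨s₀, sU⟩).get j ≠ (Stream'.corec elem succ ⟨s₀, sU⟩).get i := by
      intro i j hij
      obtain ⟨k, rfl⟩ : ∃ k, j = k + (i + 1) := ⟨j - (i + 1), by omega⟩
      rw [hget, hget]
      have h1 : (succ^[k + (i + 1)] (⟨s₀, sU⟩ : { s // s ∈ U }))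
          = succ^[k] (succ (succ^[i] ⟨s₀, sU⟩)) := by
        rw [Function.iterate_add_apply, Function.iterate_succ_apply']
      rw [h1]
      have h2 : elem (succ^[k] (succ (succ^[i] (⟨s₀, sU⟩ : { s // s ∈ U }))))
          ∈ (succ (succ^[i] (⟨s₀, sU⟩ : { s // s ∈ U }))).val :=
        hsub k _ (elem_mem _).1
      exact h2.2
    intro i j h
    rcases lt_trichotomy i j with hij | hij | hij
    · exact absurd h.symm (key i j hij)
    · exact hij
    · exact absurd h (key j i hij)
  · -- FP subset
    suffices ∀ (a : Stream' M), ∀ m ∈ FP a, ∀ p, a = Stream'.corec elem succ p → m ∈ p.val by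
      intro m hm
      exact this _ m hm ⟨s₀, sU⟩ rfl
    clear sU s₀
    intro a m h
    induction' h with b b n h ih b n h ih
    · rintro p rfl
      rw [Stream'.corec_eq, Stream'.head_cons]
      exact (elem_mem p).1
    · rintro p rfl
      have := ih (succ p) (by rw [Stream'.corec_eq, Stream'.tail_cons])
      exact this.1.1
    · rintro p rfl
      have := ih (succ p) (by rw [Stream'.corec_eq, Stream'.tail_cons])
      have h2 : elem p * n ∈ p.val := this.1.2
      rw [Stream'.corec_eq, Stream'.head_cons]
      exact h2

end Aux

/-- Let (S, ⋆) be a semigroup with a sub-semigroup S' whose complement is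
finite and whose elements are left cancellable within S'. Then for A ⊆ S the following
are equivalent: (1) FP(aₙ) ⊆ A for some injective sequence (aₙ) in S;
(2) A ∈ 𝒰 for some non-principal idempotent ultrafilter 𝒰 = 𝒰 ⋆ 𝒰 on S. -/
theorem FP_subset_iff_mem_nonprincipal_idempotent {S : Type*} [Semigroup S]
    (S' : Set S) (hsub : ∀ a ∈ S', ∀ b ∈ S', a * b ∈ S')
    (hfin : (S'ᶜ : Set S).Finite)
    (hcanc : ∀ a ∈ S', ∀ b ∈ S', ∀ b' ∈ S', a * b = a * b' → b = b')
    (A : Set S) :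
    (∃ a : Stream' S, Function.Injective a ∧ FP a ⊆ A) ↔
    (∃ U : Ultrafilter S, U * U = U ∧ (∀ s : S, U ≠ pure s) ∧ A ∈ U) := by
  -- a nonprincipal ultrafilter contains all cofinite sets
  have hVcof : ∀ (V : Ultrafilter S), (∀ y : S, ({y}ᶜ : Set S) ∈ V) →
      ∀ t : Set S, t.Finite → tᶜ ∈ V := by
    intro V hV t ht
    have h1 : (⋂ y ∈ t, ({y}ᶜ : Set S)) ∈ V := (Filter.biInter_mem ht).mpr fun y _ => hV y
    have h2 : tᶜ = ⋂ y ∈ t, ({y}ᶜ : Set S) := by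
      ext z
      simp only [Set.mem_compl_iff, Set.mem_iInter, Set.mem_singleton_iff]
      exact ⟨fun h i hi hz => h (hz ▸ hi), fun h hz => h z hz rfl⟩
    rwa [h2]
  constructor
  · rintro ⟨a, ainj, hFP⟩
    -- drop to a tail of the sequence lying entirely in S'
    have hTfin : (a ⁻¹' (S'ᶜ : Set S)).Finite :=
      Set.Finite.preimage (Set.injOn_of_injective ainj) hfin
    obtain ⟨N, hN⟩ := hTfin.bddAbove
    set b : Stream' S := a.drop (N + 1) with hb
    have hbget : ∀ i : ℕ, b.get i = a.get (i + (N + 1)) := fun i => by rw [Nat.add_comm]; exact Stream'.get_drop i (N + 1) a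
    have hbS' : ∀ i : ℕ, b.get i ∈ S' := by
      intro i
      by_contra h
      have : i + (N + 1) ∈ a ⁻¹' (S'ᶜ : Set S) := by
        show a (i + (N + 1)) ∈ (S'ᶜ : Set S)
        intro hmem
        exact h (by rw [hbget i]; exact hmem)
      have := hN this
      omega
    have binj : Function.Injective fun i : ℕ => b.get i := by
      intro i j h
      simp only [hbget] at h
      have := ainj h
      omega
    -- each FP of a tail of b is infinite
    have hFPinf : ∀ n : ℕ, (FP (b.drop n)).Infinite := by
      intro n
      have hinj : Function.Injective fun m : ℕ => (b.drop n).get m := by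
        intro i j h
        simp only [Stream'.get_drop] at h
        have := binj (h : b.get (n + i) = b.get (n + j))
        omega
      exact Set.infinite_of_injective_forall_mem hinj fun m => FP.singleton (b.drop n) m
    -- the closed subsemigroup of ultrafilters
    let K : Set (Ultrafilter S) := ⋂ x : S, { V | ({x}ᶜ : Set S) ∈ V }
    let C : ℕ → Set (Ultrafilter S) := fun n => { V | FP (b.drop n) ∈ V } ∩ K
    have hCmem : ∀ {V : Ultrafilter S} {n : ℕ}, V ∈ C n →
        FP (b.drop n) ∈ V ∧ ∀ x : S, ({x}ᶜ : Set S) ∈ V := by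
      intro V n hV
      exact ⟨hV.1, fun x => Set.mem_iInter.mp hV.2 x⟩
    have h := exists_idempotent_in_compact_subsemigroup ?_ (⋂ n, C n) ?_ ?_ ?_
    · obtain ⟨U, hU, U_idem⟩ := h
      have hU' : ∀ n, U ∈ C n := Set.mem_iInter.mp hU
      refine ⟨U, U_idem, ?_, ?_⟩
      · intro s hs
        have := (hCmem (hU' 0)).2 s
        rw [hs] at this
        exact this rfl
      · have h0 : FP (b.drop 0) ∈ U := (hCmem (hU' 0)).1
        rw [Stream'.drop_zero] at h0
        exact Filter.mem_of_superset h0 ((FP_drop_subset_FP a (N + 1)).trans hFP)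
    · exact Ultrafilter.continuous_mul_left
    · -- nonempty, via a decreasing sequence of nonempty compact closed sets
      apply IsCompact.nonempty_iInter_of_sequence_nonempty_isCompact_isClosed
      · intro n V hV
        refine ⟨?_, hV.2⟩
        have h1 : FP (b.drop (n + 1)) ∈ V := hV.1
        have h2 : FP (b.drop (n + 1)) ⊆ FP (b.drop n) := by
          rw [← Stream'.drop_drop]
          exact FP_drop_subset_FP _ 1
        exact Filter.mem_of_superset h1 h2
      · intro n
        haveI : (Filter.cofinite ⊓ Filter.principal (FP (b.drop n))).NeBot :=
          (hFPinf n).cofinite_inf_principal_neBot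
        refine ⟨Ultrafilter.of (Filter.cofinite ⊓ Filter.principal (FP (b.drop n))), ?_, ?_⟩
        · have : (↑(Ultrafilter.of (Filter.cofinite ⊓ Filter.principal (FP (b.drop n)))) :
              Filter S) ≤ Filter.principal (FP (b.drop n)) :=
            (Ultrafilter.of_le _).trans inf_le_right
          exact this (Filter.mem_principal_self _)
        · refine Set.mem_iInter.mpr fun x => ?_
          have : (↑(Ultrafilter.of (Filter.cofinite ⊓ Filter.principal (FP (b.drop n)))) :
              Filter S) ≤ Filter.cofinite :=
            (Ultrafilter.of_le _).trans inf_le_left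
          exact this (by simp [Filter.mem_cofinite])
      · exact (IsClosed.inter (ultrafilter_isClosed_basic _)
          (isClosed_iInter fun x => ultrafilter_isClosed_basic _)).isCompact
      · intro n
        exact IsClosed.inter (ultrafilter_isClosed_basic _)
          (isClosed_iInter fun x => ultrafilter_isClosed_basic _)
    · exact IsClosed.isCompact (isClosed_iInter fun n =>
        IsClosed.inter (ultrafilter_isClosed_basic _)
          (isClosed_iInter fun x => ultrafilter_isClosed_basic _))
    · -- subsemigroup property
      intro U hU V hV
      have hUn := fun n => hCmem (Set.mem_iInter.mp hU n)
      have hVn := fun n => hCmem (Set.mem_iInter.mp hV n)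
      refine Set.mem_iInter.mpr fun n => ⟨?_, Set.mem_iInter.mpr fun x => ?_⟩
      · -- FP part, as in mathlib's proof
        rw [Set.mem_setOf_eq, ← Ultrafilter.mem_coe, ← Filter.eventually_mem_set,
          Ultrafilter.eventually_mul]
        filter_upwards [(hUn n).1] with m hm
        obtain ⟨n', hn⟩ := FP.mul hm
        filter_upwards [(hVn (n + n')).1] with m' hm'
        apply hn
        simpa only [Stream'.drop_drop] using hm'
      · -- nonprincipality part
        show ({x}ᶜ : Set S) ∈ U * V
        rw [← Ultrafilter.mem_coe, ← Filter.eventually_mem_set, Ultrafilter.eventually_mul]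
        have hS'U : S' ∈ U := by
          have := hVcof U (fun y => (hUn 0).2 y) (S'ᶜ) hfin
          rwa [compl_compl] at this
        filter_upwards [hS'U] with m hm
        have hfin2 : {c : S | m * c = x}.Finite := by
          have hsubset : {c : S | m * c = x} ⊆ (S'ᶜ : Set S) ∪ {c ∈ S' | m * c = x} := by
            intro c hc
            by_cases hcS : c ∈ S'
            · exact Or.inr ⟨hcS, hc⟩
            · exact Or.inl hcS
          refine Set.Finite.subset (hfin.union ?_) hsubset
          refine Set.Subsingleton.finite ?_
          intro c hc c' hc'
          exact hcanc m hm c hc.1 c' hc'.1 (hc.2.trans hc'.2.symm)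
        have := hVcof V (fun y => (hVn 0).2 y) _ hfin2
        refine Filter.mem_of_superset this ?_
        intro c hc
        simp only [Set.mem_compl_iff, Set.mem_setOf_eq] at hc
        simp only [Set.mem_compl_iff, Set.mem_singleton_iff]
        exact hc
  · rintro ⟨U, U_idem, Unp, hA⟩
    have hcof : ∀ x : S, ({x}ᶜ : Set S) ∈ U := by
      intro x
      rcases Ultrafilter.le_cofinite_or_eq_pure U with hle | ⟨s, hs⟩
      · exact hle (by simp [Filter.mem_cofinite])
      · exact absurd hs (Unp s)
    exact exists_injective_FP_of_large' U U_idem hcof A hA
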